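/- arXiv:0905.3026 — 3 statements merged into one kernel-verified Lean document; each statement's English description precedes it below -/
import Mathlib

section
/- Let H_R be a real Hilbert space and U_R an orthogonal transformation whose complexification U_C has nonempty point spectrum. Then the tensor product operator U_R ⊗ U_R on H_R ⊗ H_R has a nonzero invariant vector. Specifically, if U_C(x+iy) = e^{iθ}(x+iy) with x+iy ≠ 0, then x⊗x + y⊗y is a nonzero vector fixed by U_R ⊗ U_R. -/
/-- Let `H` be a real Hilbert space and `U` an orthogonal transformation whose
complexification `Uc` (encoded via a real-linear embedding `j : H →ₗ[ℝ] Hc` with independent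
real and imaginary parts, intertwining `U` and `Uc`) has nonempty point spectrum:
`Uc (x+iy) = e^{iθ} (x+iy)` with `x+iy ≠ 0`.  Then the tensor product operator `U ⊗ U`
acting on the Hilbert tensor product `H ⊗ H` (encoded by a bilinear map `tsr` whose
elementary tensors have the correct inner ℝ products, intertwined with `W = U ⊗ U`)
has a nonzero invariant vector; specifically, `x⊗x + y⊗y` is nonzero and fixed by `U ⊗ U`. -/
theorem stmt1
    (H : Type*) [NormedAddCommGroup H] [InnerProductSpace ℝ H] [CompleteSpace H]
    (Hc : Type*) [NormedAddCommGroup Hc] [InnerProductSpace ℂ Hc] [CompleteSpace Hc]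
    (HT : Type*) [NormedAddCommGroup HT] [InnerProductSpace ℝ HT] [CompleteSpace HT]
    (U : H ≃ₗᵢ[ℝ] H) (Uc : Hc ≃ₗᵢ[ℂ] Hc)
    (j : H →ₗ[ℝ] Hc)
    (huniq : ∀ a b : H, j a + Complex.I • j b = 0 → a = 0 ∧ b = 0)
    (hext : ∀ a : H, Uc (j a) = j (U a))
    -- the Hilbert tensor product H ⊗ H and the operator W = U ⊗ U:
    (tsr : H →ₗ[ℝ] H →ₗ[ℝ] HT)
    (htsr : ∀ a b c d : H,
      (inner ℝ (tsr a b) (tsr c d) : ℝ) = (inner ℝ a c : ℝ) * (inner ℝ b d : ℝ))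
    (W : HT ≃ₗᵢ[ℝ] HT)
    (hW : ∀ a b : H, W (tsr a b) = tsr (U a) (U b))
    -- an eigenvalue e^{iθ} of Uc with eigenvector x + iy ≠ 0:
    (θ : ℝ) (x y : H) (hv : ¬ (x = 0 ∧ y = 0))
    (heig : Uc (j x + Complex.I • j y)
      = Complex.exp (θ * Complex.I) • (j x + Complex.I • j y)) :
    tsr x x + tsr y y ≠ 0 ∧ W (tsr x x + tsr y y) = tsr x x + tsr y y := by
  classical
  set c := Real.cos θ
  set s := Real.sin θ
  have h1 : Uc (j x + Complex.I • j y) = j (U x) + Complex.I • j (U y) := by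
    rw [map_add, hext x, map_smul, hext y]
  have h2 : Complex.exp (θ * Complex.I) • (j x + Complex.I • j y)
      = j (c • x - s • y) + Complex.I • j (s • x + c • y) := by
    rw [Complex.exp_mul_I,
      show Complex.cos θ = (c : ℂ) from (Complex.ofReal_cos θ).symm,
      show Complex.sin θ = (s : ℂ) from (Complex.ofReal_sin θ).symm]
    simp only [map_sub, map_add, map_smul, ← Complex.coe_smul]
    match_scalars
    · ring
    · linear_combination ((s : ℂ)) * Complex.I_sq
  have h3 : j (U x) + Complex.I • j (U y)
      = j (c • x - s • y) + Complex.I • j (s • x + c • y) :=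
    h1.symm.trans (heig.trans h2)
  have hkey : j (U x - (c • x - s • y)) + Complex.I • j (U y - (s • x + c • y)) = 0 := by
    have h4 : j (U x - (c • x - s • y)) + Complex.I • j (U y - (s • x + c • y))
        = (j (U x) + Complex.I • j (U y))
          - (j (c • x - s • y) + Complex.I • j (s • x + c • y)) := by
      simp only [map_sub, smul_sub]
      abel
    rw [h4, h3, sub_self]
  obtain ⟨hx', hy'⟩ := huniq _ _ hkey
  have hUx : U x = c • x - s • y := by rwa [sub_eq_zero] at hx'
  have hUy : U y = s • x + c • y := by rwa [sub_eq_zero] at hy'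
  constructor
  · -- nonzero
    intro h0
    have hinner : (inner ℝ (tsr x x + tsr y y) (tsr x x + tsr y y) : ℝ) = 0 := by
      rw [h0]; simp
    rw [inner_add_add_self] at hinner
    simp only [htsr] at hinner
    have hx0 : (inner ℝ x x : ℝ) = 0 := by
      nlinarith [mul_self_nonneg ((inner ℝ x y : ℝ)), mul_self_nonneg ((inner ℝ y x : ℝ)),
        mul_self_nonneg ((inner ℝ y y : ℝ)), (real_inner_self_nonneg : (0:ℝ) ≤ inner ℝ x x)]
    have hy0 : (inner ℝ y y : ℝ) = 0 := by
      nlinarith [mul_self_nonneg ((inner ℝ x y : ℝ)), mul_self_nonneg ((inner ℝ y x : ℝ)),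
        mul_self_nonneg ((inner ℝ x x : ℝ)), (real_inner_self_nonneg : (0:ℝ) ≤ inner ℝ y y)]
    exact hv ⟨inner_self_eq_zero.mp hx0, inner_self_eq_zero.mp hy0⟩
  · -- invariance
    rw [map_add, hW, hW, hUx, hUy]
    have hcs : s ^ 2 + c ^ 2 = 1 := Real.sin_sq_add_cos_sq θ
    have expand : tsr (c • x - s • y) (c • x - s • y) + tsr (s • x + c • y) (s • x + c • y)
        = (s ^ 2 + c ^ 2) • tsr x x + (s ^ 2 + c ^ 2) • tsr y y := by
      simp only [map_sub, map_add, map_smul, LinearMap.sub_apply, LinearMap.add_apply,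
        LinearMap.smul_apply]
      module
    rw [expand, hcs, one_smul, one_smul]
end

section
/- Let U be a unitary operator on a Hilbert space H. If U is weakly mixing, i.e. (1/n)∑_{k=1}^{n} |⟨U^k ξ, η⟩| → 0 for all ξ, η ∈ H, then for any natural numbers m, n ≥ 1 with m + n ≥ 1, the unitary (U*)^{⊗m} ⊗ U^{⊗n} on H^{⊗(m+n)} is also weakly mixing. -/
open Filter Finset

noncomputable def stmt3Phi {K : Type*} [NormedAddCommGroup K] [InnerProductSpace ℂ K]
    (V : K → K) (N : ℕ) (x y : K) : ℝ :=
  (N : ℝ)⁻¹ * ∑ k ∈ Icc 1 N, ‖(inner ℂ (V^[k] x) y : ℂ)‖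

section Aux

variable {K : Type*} [NormedAddCommGroup K] [InnerProductSpace ℂ K] (V : K → K)

lemma stmt3Phi_nonneg (N : ℕ) (x y : K) : 0 ≤ stmt3Phi V N x y :=
  mul_nonneg (by positivity) (Finset.sum_nonneg fun _ _ => norm_nonneg _)

lemma stmt3Phi_le (hn : ∀ (k : ℕ) (x : K), ‖V^[k] x‖ = ‖x‖) (N : ℕ) (x y : K) :
    stmt3Phi V N x y ≤ ‖x‖ * ‖y‖ := by
  have h1 : ∑ k ∈ Icc 1 N, ‖(inner ℂ (V^[k] x) y : ℂ)‖ ≤ (N : ℝ) * (‖x‖ * ‖y‖) := by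
    calc ∑ k ∈ Icc 1 N, ‖(inner ℂ (V^[k] x) y : ℂ)‖
        ≤ ∑ _k ∈ Icc 1 N, ‖x‖ * ‖y‖ :=
          Finset.sum_le_sum fun k _ => by
            calc ‖(inner ℂ (V^[k] x) y : ℂ)‖ ≤ ‖V^[k] x‖ * ‖y‖ := norm_inner_le_norm _ _
              _ = ‖x‖ * ‖y‖ := by rw [hn]
      _ = (N : ℝ) * (‖x‖ * ‖y‖) := by simp [Nat.card_Icc]
  rcases Nat.eq_zero_or_pos N with h | h
  · subst h; simpa [stmt3Phi] using mul_nonneg (norm_nonneg x) (norm_nonneg y)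
  · have hN : (0:ℝ) < N := by exact_mod_cast h
    calc stmt3Phi V N x y ≤ (N:ℝ)⁻¹ * ((N:ℝ) * (‖x‖ * ‖y‖)) :=
          mul_le_mul_of_nonneg_left h1 (by positivity)
      _ = ‖x‖ * ‖y‖ := by field_simp

lemma stmt3Phi_add_left (ha : ∀ (k : ℕ) (x y : K), V^[k] (x + y) = V^[k] x + V^[k] y)
    (N : ℕ) (x y z : K) :
    stmt3Phi V N (x + y) z ≤ stmt3Phi V N x z + stmt3Phi V N y z := by
  unfold stmt3Phi
  rw [← mul_add, ← Finset.sum_add_distrib]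
  refine mul_le_mul_of_nonneg_left (Finset.sum_le_sum fun k _ => ?_) (by positivity)
  rw [ha, inner_add_left]
  exact norm_add_le _ _

lemma stmt3Phi_add_right (N : ℕ) (x y z : K) :
    stmt3Phi V N x (y + z) ≤ stmt3Phi V N x y + stmt3Phi V N x z := by
  unfold stmt3Phi
  rw [← mul_add, ← Finset.sum_add_distrib]
  refine mul_le_mul_of_nonneg_left (Finset.sum_le_sum fun k _ => ?_) (by positivity)
  rw [inner_add_right]
  exact norm_add_le _ _

lemma stmt3Phi_smul_left (hs : ∀ (k : ℕ) (c : ℂ) (x : K), V^[k] (c • x) = c • V^[k] x)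
    (N : ℕ) (c : ℂ) (x y : K) : stmt3Phi V N (c • x) y = ‖c‖ * stmt3Phi V N x y := by
  unfold stmt3Phi
  have h : ∀ k ∈ Icc 1 N, ‖(inner ℂ (V^[k] (c • x)) y : ℂ)‖ = ‖c‖ * ‖(inner ℂ (V^[k] x) y : ℂ)‖ := by
    intro k _
    rw [hs, inner_smul_left, norm_mul, RCLike.norm_conj]
  rw [Finset.sum_congr rfl h, ← Finset.mul_sum]
  ring

lemma stmt3Phi_smul_right (N : ℕ) (c : ℂ) (x y : K) :
    stmt3Phi V N x (c • y) = ‖c‖ * stmt3Phi V N x y := by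
  unfold stmt3Phi
  have h : ∀ k ∈ Icc 1 N, ‖(inner ℂ (V^[k] x) (c • y) : ℂ)‖ = ‖c‖ * ‖(inner ℂ (V^[k] x) y : ℂ)‖ := by
    intro k _
    rw [inner_smul_right, norm_mul]
  rw [Finset.sum_congr rfl h, ← Finset.mul_sum]
  ring

lemma stmt3Phi_zero_left (hz : ∀ k : ℕ, V^[k] (0 : K) = 0) (N : ℕ) (y : K) :
    stmt3Phi V N 0 y = 0 := by
  simp [stmt3Phi, hz]

lemma stmt3Phi_zero_right (N : ℕ) (x : K) : stmt3Phi V N x 0 = 0 := by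
  simp [stmt3Phi]

lemma stmt3_squeeze {F G : ℕ → ℝ} (h0 : ∀ N, 0 ≤ F N) (h1 : ∀ N, F N ≤ G N)
    (hG : Tendsto G atTop (nhds 0)) : Tendsto F atTop (nhds 0) :=
  tendsto_of_tendsto_of_tendsto_of_le_of_le tendsto_const_nhds hG h0 h1

end Aux

/-- Let `U` be a unitary on a complex Hilbert space `H`.  If `U` is weakly
mixing, i.e. `(1/n) ∑_{k=1}^n |⟨U^k ξ, η⟩| → 0` for all `ξ, η ∈ H`, then for natural numbers
`m, n` with `m + n ≥ 1` the unitary `(U*)^{⊗m} ⊗ U^{⊗n}` on `H^{⊗(m+n)}` is weakly mixing.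
The tensor power `H^{⊗(m+n)}` is encoded as a Hilbert space `K` together with a map `t` on
elementary tensors having the correct inner products and total (dense) span, and `V` is the
unitary on `K` acting as `U*` on the first `m` factors and `U` on the remaining `n`. -/
theorem stmt3
    (H : Type*) [NormedAddCommGroup H] [InnerProductSpace ℂ H] [CompleteSpace H]
    (K : Type*) [NormedAddCommGroup K] [InnerProductSpace ℂ K] [CompleteSpace K]
    (U : H ≃ₗᵢ[ℂ] H) (m n : ℕ) (hmn : 1 ≤ m + n)
    (t : (Fin (m + n) → H) → K)
    (ht : ∀ f g : Fin (m + n) → H,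
      (inner ℂ (t f) (t g) : ℂ) = ∏ i, (inner ℂ (f i) (g i) : ℂ))
    (htdense : Dense (↑(Submodule.span ℂ (Set.range t)) : Set K))
    (V : K ≃ₗᵢ[ℂ] K)
    (hV : ∀ f : Fin (m + n) → H,
      V (t f) = t (fun i => if (i : ℕ) < m then U.symm (f i) else U (f i)))
    (hU : ∀ ξ η : H, Tendsto
      (fun N : ℕ => (N : ℝ)⁻¹ * ∑ k ∈ Icc 1 N, ‖(inner ℂ ((⇑U)^[k] ξ) η : ℂ)‖)
      atTop (nhds 0)) :
    ∀ ξ η : K, Tendsto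
      (fun N : ℕ => (N : ℝ)⁻¹ * ∑ k ∈ Icc 1 N, ‖(inner ℂ ((⇑V)^[k] ξ) η : ℂ)‖)
      atTop (nhds 0) := by
  -- basic facts about iterates
  have hVadd : ∀ (k : ℕ) (x y : K), (⇑V)^[k] (x + y) = (⇑V)^[k] x + (⇑V)^[k] y := by
    intro k
    induction k with
    | zero => intro x y; simp
    | succ k ih => intro x y; simp [Function.iterate_succ_apply', ih, map_add]
  have hVsmul : ∀ (k : ℕ) (c : ℂ) (x : K), (⇑V)^[k] (c • x) = c • (⇑V)^[k] x := by
    intro k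
    induction k with
    | zero => intro c x; simp
    | succ k ih => intro c x; simp [Function.iterate_succ_apply', ih, map_smul]
  have hVzero : ∀ k : ℕ, (⇑V)^[k] (0 : K) = 0 := by
    intro k
    induction k with
    | zero => simp
    | succ k ih => simp [Function.iterate_succ_apply', ih]
  have hVnorm : ∀ (k : ℕ) (x : K), ‖(⇑V)^[k] x‖ = ‖x‖ := by
    intro k
    induction k with
    | zero => intro x; simp
    | succ k ih => intro x; simp [Function.iterate_succ_apply', ih]
  have hUnorm : ∀ (k : ℕ) (x : H), ‖(⇑U)^[k] x‖ = ‖x‖ := by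
    intro k
    induction k with
    | zero => intro x; simp
    | succ k ih => intro x; simp [Function.iterate_succ_apply', ih]
  have hUsnorm : ∀ (k : ℕ) (x : H), ‖(⇑U.symm)^[k] x‖ = ‖x‖ := by
    intro k
    induction k with
    | zero => intro x; simp
    | succ k ih => intro x; simp [Function.iterate_succ_apply', ih]
  have hstep : ∀ a b : H, (inner ℂ (U.symm a) b : ℂ) = inner ℂ a (U b) := by
    intro a b
    simpa using (U.inner_map_map (U.symm a) b).symm
  have hshift : ∀ (k : ℕ) (x y : H),
      (inner ℂ ((⇑U.symm)^[k] x) y : ℂ) = inner ℂ x ((⇑U)^[k] y) := by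
    intro k
    induction k with
    | zero => intro x y; simp
    | succ k ih =>
      intro x y
      calc (inner ℂ ((⇑U.symm)^[k + 1] x) y : ℂ)
          = inner ℂ ((⇑U.symm)^[k] (U.symm x)) y := by rw [Function.iterate_succ_apply]
        _ = inner ℂ (U.symm x) ((⇑U)^[k] y) := ih _ _
        _ = inner ℂ x (U ((⇑U)^[k] y)) := hstep _ _
        _ = inner ℂ x ((⇑U)^[k + 1] y) := by rw [Function.iterate_succ_apply']
  -- transfer lemma
  have hkey : ∀ (x y : K) (a b : H) (C : ℝ), 0 ≤ C →
      (∀ k : ℕ, ‖(inner ℂ ((⇑V)^[k] x) y : ℂ)‖ ≤ C * ‖(inner ℂ ((⇑U)^[k] a) b : ℂ)‖) →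
      Tendsto (fun N => stmt3Phi (⇑V) N x y) atTop (nhds 0) := by
    intro x y a b C hC h
    refine stmt3_squeeze (fun N => stmt3Phi_nonneg _ _ _ _)
      (G := fun N => C * ((N : ℝ)⁻¹ * ∑ k ∈ Icc 1 N, ‖(inner ℂ ((⇑U)^[k] a) b : ℂ)‖))
      (fun N => ?_) ?_
    · unfold stmt3Phi
      have h2 : ∑ k ∈ Icc 1 N, ‖(inner ℂ ((⇑V)^[k] x) y : ℂ)‖
          ≤ ∑ k ∈ Icc 1 N, C * ‖(inner ℂ ((⇑U)^[k] a) b : ℂ)‖ :=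
        Finset.sum_le_sum fun k _ => h k
      calc (N : ℝ)⁻¹ * ∑ k ∈ Icc 1 N, ‖(inner ℂ ((⇑V)^[k] x) y : ℂ)‖
          ≤ (N : ℝ)⁻¹ * ∑ k ∈ Icc 1 N, C * ‖(inner ℂ ((⇑U)^[k] a) b : ℂ)‖ :=
            mul_le_mul_of_nonneg_left h2 (by positivity)
        _ = C * ((N : ℝ)⁻¹ * ∑ k ∈ Icc 1 N, ‖(inner ℂ ((⇑U)^[k] a) b : ℂ)‖) := by
            rw [← Finset.mul_sum]; ring
    · simpa using (hU a b).const_mul C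
  -- elementary tensors
  have hbase : ∀ f g : Fin (m + n) → H,
      Tendsto (fun N => stmt3Phi (⇑V) N (t f) (t g)) atTop (nhds 0) := by
    intro f g
    set fk : ℕ → Fin (m + n) → H :=
      fun k i => if (i : ℕ) < m then (⇑U.symm)^[k] (f i) else (⇑U)^[k] (f i) with hfk
    have hVk : ∀ k : ℕ, (⇑V)^[k] (t f) = t (fk k) := by
      intro k
      induction k with
      | zero =>
        simp only [Function.iterate_zero, id_eq]
        congr 1
        funext i
        by_cases hi : (i : ℕ) < m <;> simp [hfk, hi]
      | succ k ih =>
        rw [Function.iterate_succ_apply', ih, hV]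
        congr 1
        funext i
        by_cases hi : (i : ℕ) < m
        · simp [hfk, hi, Function.iterate_succ_apply']
        · simp [hfk, hi, Function.iterate_succ_apply']
    obtain ⟨i0, a, b, hi0⟩ : ∃ (i0 : Fin (m + n)) (a b : H), ∀ k : ℕ,
        ‖(inner ℂ (fk k i0) (g i0) : ℂ)‖ = ‖(inner ℂ ((⇑U)^[k] a) b : ℂ)‖ := by
      rcases Nat.lt_or_ge m (m + n) with h | h
      · refine ⟨⟨m, h⟩, f ⟨m, h⟩, g ⟨m, h⟩, fun k => ?_⟩
        simp [hfk]
      · have hm : 0 < m := by omega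
        have h0 : 0 < m + n := by omega
        refine ⟨⟨0, h0⟩, g ⟨0, h0⟩, f ⟨0, h0⟩, fun k => ?_⟩
        have hcoe : ((⟨0, h0⟩ : Fin (m + n)) : ℕ) < m := hm
        rw [show fk k ⟨0, h0⟩ = (⇑U.symm)^[k] (f ⟨0, h0⟩) from by simp [hfk, hcoe]]
        rw [hshift, norm_inner_symm]
    set C : ℝ := ∏ i ∈ Finset.univ.erase i0, (‖f i‖ * ‖g i‖) with hC
    have hC0 : 0 ≤ C :=
      Finset.prod_nonneg fun i _ => mul_nonneg (norm_nonneg _) (norm_nonneg _)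
    refine hkey _ _ a b C hC0 ?_
    intro k
    have hterm : ∀ i, ‖(inner ℂ (fk k i) (g i) : ℂ)‖ ≤ ‖f i‖ * ‖g i‖ := by
      intro i
      refine le_trans (norm_inner_le_norm _ _) ?_
      have hn2 : ‖fk k i‖ = ‖f i‖ := by
        by_cases hi : (i : ℕ) < m
        · simp [hfk, hi, hUsnorm]
        · simp [hfk, hi, hUnorm]
      rw [hn2]
    calc ‖(inner ℂ ((⇑V)^[k] (t f)) (t g) : ℂ)‖
        = ∏ i, ‖(inner ℂ (fk k i) (g i) : ℂ)‖ := by rw [hVk k, ht, norm_prod]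
      _ = ‖(inner ℂ (fk k i0) (g i0) : ℂ)‖ * ∏ i ∈ Finset.univ.erase i0,
            ‖(inner ℂ (fk k i) (g i) : ℂ)‖ :=
          (Finset.mul_prod_erase Finset.univ _ (Finset.mem_univ i0)).symm
      _ ≤ ‖(inner ℂ ((⇑U)^[k] a) b : ℂ)‖ * C := by
          rw [hi0 k]
          refine mul_le_mul_of_nonneg_left ?_ (norm_nonneg _)
          exact Finset.prod_le_prod (fun i _ => norm_nonneg _) fun i _ => hterm i
      _ = C * ‖(inner ℂ ((⇑U)^[k] a) b : ℂ)‖ := mul_comm _ _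
  -- extend to the span, first variable
  have hsp1 : ∀ (g : Fin (m + n) → H) (x : K), x ∈ Submodule.span ℂ (Set.range t) →
      Tendsto (fun N => stmt3Phi (⇑V) N x (t g)) atTop (nhds 0) := by
    intro g x hx
    induction hx using Submodule.span_induction with
    | mem x hx => obtain ⟨f, rfl⟩ := hx; exact hbase f g
    | zero =>
      have h2 : (fun N => stmt3Phi (⇑V) N (0 : K) (t g)) = fun _ => (0 : ℝ) :=
        funext fun N => stmt3Phi_zero_left _ hVzero N _
      rw [h2]; exact tendsto_const_nhds
    | add x y hx hy ihx ihy =>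
      refine stmt3_squeeze (fun N => stmt3Phi_nonneg _ _ _ _)
        (fun N => stmt3Phi_add_left _ hVadd N x y (t g)) ?_
      simpa using ihx.add ihy
    | smul c x hx ihx =>
      have h2 : (fun N => stmt3Phi (⇑V) N (c • x) (t g))
          = fun N => ‖c‖ * stmt3Phi (⇑V) N x (t g) :=
        funext fun N => stmt3Phi_smul_left _ hVsmul N c x _
      rw [h2]
      simpa using ihx.const_mul ‖c‖
  -- both variables in span
  have hsp : ∀ x ∈ Submodule.span ℂ (Set.range t), ∀ y ∈ Submodule.span ℂ (Set.range t),
      Tendsto (fun N => stmt3Phi (⇑V) N x y) atTop (nhds 0) := by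
    intro x hx y hy
    induction hy using Submodule.span_induction with
    | mem y hy => obtain ⟨g, rfl⟩ := hy; exact hsp1 g x hx
    | zero =>
      have h2 : (fun N => stmt3Phi (⇑V) N x (0 : K)) = fun _ => (0 : ℝ) :=
        funext fun N => stmt3Phi_zero_right _ N _
      rw [h2]; exact tendsto_const_nhds
    | add y z hy hz ihy ihz =>
      refine stmt3_squeeze (fun N => stmt3Phi_nonneg _ _ _ _)
        (fun N => stmt3Phi_add_right _ N x y z) ?_
      simpa using ihy.add ihz
    | smul c y hy ihy =>
      have h2 : (fun N => stmt3Phi (⇑V) N x (c • y))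
          = fun N => ‖c‖ * stmt3Phi (⇑V) N x y :=
        funext fun N => stmt3Phi_smul_right _ N c x y
      rw [h2]
      simpa using ihy.const_mul ‖c‖
  -- density argument
  intro ξ η
  show Tendsto (fun N => stmt3Phi (⇑V) N ξ η) atTop (nhds 0)
  rw [Metric.tendsto_atTop]
  intro ε hε
  have hδ1 : (0 : ℝ) < (ε / 3) / (‖η‖ + 1) := by positivity
  obtain ⟨x, hxS, hxd⟩ := Metric.mem_closure_iff.mp (htdense ξ) _ hδ1
  have hδ2 : (0 : ℝ) < (ε / 3) / (‖x‖ + 1) := by positivity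
  obtain ⟨y, hyS, hyd⟩ := Metric.mem_closure_iff.mp (htdense η) _ hδ2
  have hconv := hsp x hxS y hyS
  rw [Metric.tendsto_atTop] at hconv
  obtain ⟨N0, hN0⟩ := hconv (ε / 3) (by positivity)
  refine ⟨N0, fun N hN => ?_⟩
  have hxy : stmt3Phi (⇑V) N x y < ε / 3 := by
    have := hN0 N hN
    rwa [Real.dist_eq, sub_zero, abs_of_nonneg (stmt3Phi_nonneg _ _ _ _)] at this
  have hb1 : stmt3Phi (⇑V) N (ξ - x) η ≤ ε / 3 := by
    refine le_trans (stmt3Phi_le _ hVnorm N _ _) ?_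
    have h1 : ‖ξ - x‖ < (ε / 3) / (‖η‖ + 1) := by rwa [dist_eq_norm] at hxd
    calc ‖ξ - x‖ * ‖η‖ ≤ ((ε / 3) / (‖η‖ + 1)) * (‖η‖ + 1) := by
          apply mul_le_mul (le_of_lt h1) (by linarith [norm_nonneg η]) (norm_nonneg _)
            (le_of_lt hδ1)
      _ = ε / 3 := by field_simp
  have hb2 : stmt3Phi (⇑V) N x (η - y) ≤ ε / 3 := by
    refine le_trans (stmt3Phi_le _ hVnorm N _ _) ?_
    have h1 : ‖η - y‖ < (ε / 3) / (‖x‖ + 1) := by rwa [dist_eq_norm] at hyd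
    calc ‖x‖ * ‖η - y‖ ≤ (‖x‖ + 1) * ((ε / 3) / (‖x‖ + 1)) := by
          apply mul_le_mul (by linarith [norm_nonneg x]) (le_of_lt h1) (norm_nonneg _)
            (by linarith [norm_nonneg x])
      _ = ε / 3 := by field_simp
  have ht1 : stmt3Phi (⇑V) N ξ η ≤ stmt3Phi (⇑V) N (ξ - x) η + stmt3Phi (⇑V) N x η := by
    have := stmt3Phi_add_left (⇑V) hVadd N (ξ - x) x η
    rwa [sub_add_cancel] at this
  have ht2 : stmt3Phi (⇑V) N x η ≤ stmt3Phi (⇑V) N x (η - y) + stmt3Phi (⇑V) N x y := by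
    have := stmt3Phi_add_right (⇑V) N x (η - y) y
    rwa [sub_add_cancel] at this
  rw [Real.dist_eq, sub_zero, abs_of_nonneg (stmt3Phi_nonneg _ _ _ _)]
  linarith
end

section
/- Let {k_l} be any sequence of natural numbers, U a unitary on H, and α_U the Bogoliubov automorphism on the full Fock space. Then for any vectors f₁,…,f_m, g₁,…,g_n ∈ H, the operator norm of ∑_{l=1}^{N} α_U^{k_l}(a^+(f₁)⋯a^+(f_m) a(g₁)⋯a(g_n)) on F(H) is bounded above by the Hilbert-space norm of ∑_{l=1}^{N} U^{-k_l}f₁ ⊗ ⋯ ⊗ U^{-k_l}f_m ⊗ U^{k_l}g_n ⊗ ⋯ ⊗ U^{k_l}g₁ in H^{⊗(m+n)}. -/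
open Finset

structure FullFock (H F : Type*) [NormedAddCommGroup H] [InnerProductSpace ℂ H]
    [NormedAddCommGroup F] [InnerProductSpace ℂ F] where
  vac : F
  tens : (n : ℕ) → (Fin n → H) → F
  tens_zero : ∀ f : Fin 0 → H, tens 0 f = vac
  inner_tens : ∀ (n : ℕ) (f g : Fin n → H),
    (inner ℂ (tens n f) (tens n g) : ℂ) = ∏ i, (inner ℂ (f i) (g i) : ℂ)
  inner_tens_ne : ∀ (m n : ℕ) (f : Fin m → H) (g : Fin n → H), m ≠ n →
    (inner ℂ (tens m f) (tens n g) : ℂ) = 0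
  tens_add : ∀ (n : ℕ) (f : Fin n → H) (i : Fin n) (a b : H),
    tens n (Function.update f i (a + b))
      = tens n (Function.update f i a) + tens n (Function.update f i b)
  tens_smul : ∀ (n : ℕ) (f : Fin n → H) (i : Fin n) (c : ℂ) (a : H),
    tens n (Function.update f i (c • a)) = c • tens n (Function.update f i a)
  dense_span : Dense
    (↑(Submodule.span ℂ (⋃ n, Set.range (tens n))) : Set F)

namespace Stmt19Aux

local notation "⟪" x ", " y "⟫" => (inner ℂ x y : ℂ)

variable {H : Type*} [NormedAddCommGroup H] [InnerProductSpace ℂ H]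
variable {F : Type*} [NormedAddCommGroup F] [InnerProductSpace ℂ F]

lemma dense_ext (FD : FullFock H F) (a b : F →L[ℂ] ℂ)
    (h : ∀ (p : ℕ) (ξ : Fin p → H), a (FD.tens p ξ) = b (FD.tens p ξ)) : a = b := by
  have heq : Set.EqOn ⇑a ⇑b
      (↑(Submodule.span ℂ (⋃ n, Set.range (FD.tens n))) : Set F) := by
    intro x hx
    rw [SetLike.mem_coe] at hx
    induction hx using Submodule.span_induction with
    | mem x hx =>
        obtain ⟨_, ⟨p, rfl⟩, ⟨ξ, rfl⟩⟩ := hx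
        exact h p ξ
    | zero => simp
    | add x y _ _ hx hy => simp only [map_add, Set.EqOn] at *; simp [hx, hy]
    | smul c x _ hx => simp only [map_smul] at *; simp [hx]
  ext x
  exact congrFun (Continuous.ext_on FD.dense_span a.continuous b.continuous heq) x

variable (FD : FullFock H F) (cr an : H → F →L[ℂ] F)

lemma cr_an_pair_tens
    (hcr : ∀ (f : H) (n : ℕ) (g : Fin n → H),
      cr f (FD.tens n g) = FD.tens (n + 1) (Fin.cons f g))
    (han_vac : ∀ f : H, an f FD.vac = 0)
    (han : ∀ (f : H) (n : ℕ) (g : Fin (n + 1) → H),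
      an f (FD.tens (n + 1) g)
        = (inner ℂ f (g 0) : ℂ) • FD.tens n (fun j => g j.succ)) :
    ∀ (h : H) (p : ℕ) (ξ : Fin p → H) (y : F),
      ⟪cr h (FD.tens p ξ), y⟫ = ⟪FD.tens p ξ, an h y⟫ := by
  intro h p ξ
  have key := dense_ext FD (innerSL ℂ (cr h (FD.tens p ξ)))
      ((innerSL ℂ (FD.tens p ξ)).comp (an h)) ?_
  · intro y
    have := congrArg (fun T => T y) key
    simpa using this
  · intro q η
    simp only [ContinuousLinearMap.comp_apply, innerSL_apply_apply]
    rw [hcr]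
    match q with
    | 0 =>
        have h1 : an h (FD.tens 0 η) = 0 := by rw [FD.tens_zero η, han_vac]
        rw [h1, inner_zero_right]
        exact FD.inner_tens_ne _ _ _ _ (Nat.succ_ne_zero p)
    | Nat.succ q =>
        rw [han, inner_smul_right]
        rcases eq_or_ne p q with rfl | hpq
        · rw [FD.inner_tens, FD.inner_tens, Fin.prod_univ_succ]
          simp
        · rw [FD.inner_tens_ne _ _ _ _ (by omega),
            FD.inner_tens_ne _ _ _ _ hpq, mul_zero]

lemma cr_an_pair
    (hcr : ∀ (f : H) (n : ℕ) (g : Fin n → H),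
      cr f (FD.tens n g) = FD.tens (n + 1) (Fin.cons f g))
    (han_vac : ∀ f : H, an f FD.vac = 0)
    (han : ∀ (f : H) (n : ℕ) (g : Fin (n + 1) → H),
      an f (FD.tens (n + 1) g)
        = (inner ℂ f (g 0) : ℂ) • FD.tens n (fun j => g j.succ)) :
    ∀ (h : H) (x y : F), ⟪cr h x, y⟫ = ⟪x, an h y⟫ := by
  have key : ∀ (h : H) (y x : F), ⟪y, cr h x⟫ = ⟪an h y, x⟫ := by
    intro h y
    have key2 := dense_ext FD ((innerSL ℂ y).comp (cr h)) (innerSL ℂ (an h y)) ?_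
    · intro x
      have := congrArg (fun T => T x) key2
      simpa using this
    · intro p ξ
      simp only [ContinuousLinearMap.comp_apply, innerSL_apply_apply]
      rw [← inner_conj_symm y (cr h (FD.tens p ξ)),
        cr_an_pair_tens FD cr an hcr han_vac han, inner_conj_symm]
  intro h x y
  rw [← inner_conj_symm (cr h x) y, key, inner_conj_symm]

lemma cr_cr_inner
    (hcr : ∀ (f : H) (n : ℕ) (g : Fin n → H),
      cr f (FD.tens n g) = FD.tens (n + 1) (Fin.cons f g)) :
    ∀ (h h' : H) (x y : F), ⟪cr h x, cr h' y⟫ = ⟪h, h'⟫ * ⟪x, y⟫ := by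
  have pass1 : ∀ (h h' : H) (p : ℕ) (ξ : Fin p → H) (y : F),
      ⟪cr h (FD.tens p ξ), cr h' y⟫ = ⟪h, h'⟫ * ⟪FD.tens p ξ, y⟫ := by
    intro h h' p ξ
    have key := dense_ext FD ((innerSL ℂ (cr h (FD.tens p ξ))).comp (cr h'))
        ((⟪h, h'⟫) • innerSL ℂ (FD.tens p ξ)) ?_
    · intro y
      have := congrArg (fun T => T y) key
      simpa [ContinuousLinearMap.smul_apply] using this
    · intro q η
      simp only [ContinuousLinearMap.comp_apply, innerSL_apply_apply,
        ContinuousLinearMap.smul_apply, smul_eq_mul]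
      rw [hcr, hcr]
      rcases eq_or_ne p q with rfl | hpq
      · rw [FD.inner_tens, FD.inner_tens, Fin.prod_univ_succ]
        simp
      · rw [FD.inner_tens_ne _ _ _ _ (by omega),
          FD.inner_tens_ne _ _ _ _ hpq, mul_zero]
  intro h h' x y
  have key := dense_ext FD ((innerSL ℂ (cr h x)).comp (cr h'))
      ((⟪h, h'⟫) • innerSL ℂ x) ?_
  · have := congrArg (fun T => T y) key
    simpa [ContinuousLinearMap.smul_apply] using this
  · intro q η
    simp only [ContinuousLinearMap.comp_apply, innerSL_apply_apply,
      ContinuousLinearMap.smul_apply, smul_eq_mul]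
    rw [← inner_conj_symm (cr h x) (cr h' (FD.tens q η)), pass1 h' h,
      map_mul, inner_conj_symm, inner_conj_symm]

lemma crprod_inner
    (hcr : ∀ (f : H) (n : ℕ) (g : Fin n → H),
      cr f (FD.tens n g) = FD.tens (n + 1) (Fin.cons f g)) :
    ∀ (p : ℕ) (a a' : Fin p → H) (x y : F),
      ⟪(List.ofFn fun i => cr (a i)).prod x, (List.ofFn fun i => cr (a' i)).prod y⟫
        = (∏ i, ⟪a i, a' i⟫) * ⟪x, y⟫ := by
  intro p
  induction p with
  | zero => intro a a' x y; simp
  | succ p ih =>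
      intro a a' x y
      rw [List.ofFn_succ, List.ofFn_succ, List.prod_cons, List.prod_cons,
        ContinuousLinearMap.mul_apply, ContinuousLinearMap.mul_apply,
        cr_cr_inner FD cr hcr, ih, Fin.prod_univ_succ, mul_assoc]

lemma anprod_pair
    (hcr : ∀ (f : H) (n : ℕ) (g : Fin n → H),
      cr f (FD.tens n g) = FD.tens (n + 1) (Fin.cons f g))
    (han_vac : ∀ f : H, an f FD.vac = 0)
    (han : ∀ (f : H) (n : ℕ) (g : Fin (n + 1) → H),
      an f (FD.tens (n + 1) g)
        = (inner ℂ f (g 0) : ℂ) • FD.tens n (fun j => g j.succ)) :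
    ∀ (p : ℕ) (b : Fin p → H) (x y : F),
      ⟪(List.ofFn fun j => an (b j)).prod x, y⟫
        = ⟪x, (List.ofFn fun j => cr (b j.rev)).prod y⟫ := by
  have an_cr : ∀ (h : H) (x y : F), ⟪an h x, y⟫ = ⟪x, cr h y⟫ := by
    intro h x y
    rw [← inner_conj_symm (an h x) y, ← cr_an_pair FD cr an hcr han_vac han,
      inner_conj_symm]
  intro p
  induction p with
  | zero => intro b x y; simp
  | succ p ih =>
      intro b x y
      have hre : (List.ofFn fun j : Fin (p + 1) => cr (b j.rev)).prod
          = (List.ofFn fun i : Fin p => cr (b i.rev.succ)).prod * cr (b 0) := by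
        rw [List.ofFn_succ', List.prod_concat]
        simp [Fin.rev_castSucc, Fin.rev_last]
      rw [hre, List.ofFn_succ, List.prod_cons, ContinuousLinearMap.mul_apply,
        ContinuousLinearMap.mul_apply, an_cr,
        ih (fun i => b i.succ) x (cr (b 0) y)]

lemma inner_iterate (U : H ≃ₗᵢ[ℂ] H) :
    ∀ (c : ℕ) (x y : H), ⟪(⇑U)^[c] x, (⇑U)^[c] y⟫ = ⟪x, y⟫ := by
  intro c
  induction c with
  | zero => intro x y; simp
  | succ c ih =>
      intro x y
      rw [Function.iterate_succ_apply', Function.iterate_succ_apply',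
        LinearIsometryEquiv.inner_map_map, ih]

lemma symm_iterate_inner (U : H ≃ₗᵢ[ℂ] H) (a b : ℕ) (x y : H) :
    ⟪(⇑U.symm)^[a] x, (⇑U.symm)^[b] y⟫ = ⟪(⇑U)^[b] x, (⇑U)^[a] y⟫ := by
  have cancel : ∀ (c : ℕ) (z : H), (⇑U)^[c] ((⇑U.symm)^[c] z) = z := by
    intro c
    exact Function.LeftInverse.iterate (fun z => U.apply_symm_apply z) c
  have h1 : (⇑U)^[a + b] ((⇑U.symm)^[a] x) = (⇑U)^[b] x := by
    rw [Nat.add_comm, Function.iterate_add_apply, cancel]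
  have h2 : (⇑U)^[a + b] ((⇑U.symm)^[b] y) = (⇑U)^[a] y := by
    rw [Function.iterate_add_apply, cancel]
  rw [← inner_iterate U (a + b) ((⇑U.symm)^[a] x) ((⇑U.symm)^[b] y), h1, h2]

end Stmt19Aux

local notation "⟪" x ", " y "⟫" => (inner ℂ x y : ℂ)

open scoped ComplexOrder in
/-- let `{k_l}` be any sequence of natural numbers, `U` a unitary on `H`, and
`α_U` the Bogoliubov automorphism on the full Fock space, so that
`α_U^{k}(a⁺(f₁)⋯a⁺(f_m)a(g₁)⋯a(g_n)) = a⁺(U^k f₁)⋯a⁺(U^k f_m)a(U^k g₁)⋯a(U^k g_n)`.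
Then for any `f₁,…,f_m, g₁,…,g_n ∈ H` the operator norm of
`∑_{l=1}^N α_U^{k_l}(a⁺(f₁)⋯a⁺(f_m)a(g₁)⋯a(g_n))` on `F(H)` is bounded above by the
Hilbert-space norm of
`∑_{l=1}^N U^{-k_l}f₁ ⊗ ⋯ ⊗ U^{-k_l}f_m ⊗ U^{k_l}g_n ⊗ ⋯ ⊗ U^{k_l}g₁` in `H^{⊗(m+n)}`. -/
theorem stmt19
    (H : Type*) [NormedAddCommGroup H] [InnerProductSpace ℂ H] [CompleteSpace H]
    (F : Type*) [NormedAddCommGroup F] [InnerProductSpace ℂ F] [CompleteSpace F]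
    (FD : FullFock H F)
    (cr an : H → F →L[ℂ] F)
    (hcr : ∀ (f : H) (n : ℕ) (g : Fin n → H),
      cr f (FD.tens n g) = FD.tens (n + 1) (Fin.cons f g))
    (han_vac : ∀ f : H, an f FD.vac = 0)
    (han : ∀ (f : H) (n : ℕ) (g : Fin (n + 1) → H),
      an f (FD.tens (n + 1) g)
        = (inner ℂ f (g 0) : ℂ) • FD.tens n (fun j => g j.succ))
    (U : H ≃ₗᵢ[ℂ] H)
    (m n : ℕ) (f : Fin m → H) (g : Fin n → H)
    (k : ℕ → ℕ) (N : ℕ) :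
    ‖∑ l ∈ Icc 1 N,
        ((List.ofFn fun i : Fin m => cr ((⇑U)^[k l] (f i))).prod *
          (List.ofFn fun j : Fin n => an ((⇑U)^[k l] (g j))).prod)‖
      ≤ ‖∑ l ∈ Icc 1 N,
          FD.tens (m + n)
            (Fin.append (fun i : Fin m => (⇑U.symm)^[k l] (f i))
              (fun j : Fin n => (⇑U)^[k l] (g j.rev)))‖ := by
  classical
  set Top := ∑ l ∈ Icc 1 N,
        ((List.ofFn fun i : Fin m => cr ((⇑U)^[k l] (f i))).prod *
          (List.ofFn fun j : Fin n => an ((⇑U)^[k l] (g j))).prod) with hTop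
  set v := ∑ l ∈ Icc 1 N,
          FD.tens (m + n)
            (Fin.append (fun i : Fin m => (⇑U.symm)^[k l] (f i))
              (fun j : Fin n => (⇑U)^[k l] (g j.rev))) with hv
  let ι : Type := ↥(Icc 1 N)
  let a : ι → Fin m → H := fun l i => (⇑U)^[k l.1] (f i)
  let b : ι → Fin n → H := fun l j => (⇑U)^[k l.1] (g j)
  let C : ι → F →L[ℂ] F := fun l => (List.ofFn fun i => cr (a l i)).prod
  let D : ι → F →L[ℂ] F := fun l => (List.ofFn fun j => an (b l j)).prod
  let E : ι → F →L[ℂ] F := fun l => (List.ofFn fun j => cr (b l j.rev)).prod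
  let d : ι → F := fun l => FD.tens n (fun j => b l j.rev)
  let e : ι → F := fun l => FD.tens m (a l)
  -- the Gram matrix of the vectors `e l` and its factorization
  let Lam : Matrix ι ι ℂ := Matrix.of fun l l' => ⟪e l, e l'⟫
  have hherm : Lam.IsHermitian := by
    ext l l'
    simp only [Matrix.conjTranspose_apply, Matrix.of_apply, Lam, RCLike.star_def]
    exact inner_conj_symm _ _
  have hpsd : Lam.PosSemidef := by
    refine Matrix.PosSemidef.of_dotProduct_mulVec_nonneg hherm fun x => ?_
    have hq : dotProduct (star x) (Lam.mulVec x)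
        = ⟪∑ l : ι, x l • e l, ∑ l : ι, x l • e l⟫ := by
      rw [sum_inner]
      simp only [dotProduct, Matrix.mulVec, Pi.star_apply, inner_sum,
        inner_smul_left, inner_smul_right, Matrix.of_apply, Lam, RCLike.star_def]
      refine Finset.sum_congr rfl fun l _ => ?_
      rw [Finset.mul_sum]
      exact Finset.sum_congr rfl fun l' _ => by ring
    rw [hq, Complex.nonneg_iff]
    constructor
    · simpa using inner_self_nonneg (𝕜 := ℂ) (x := ∑ l : ι, x l • e l)
    · have h7 := inner_self_im (𝕜 := ℂ) (∑ l : ι, x l • e l)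
      rw [RCLike.im_to_complex] at h7
      exact h7.symm
  obtain ⟨B, hB⟩ : ∃ B : Matrix ι ι ℂ, Lam = B.conjTranspose * B := by
    open scoped MatrixOrder in
    exact ⟨CFC.sqrt Lam, by rw [← Matrix.star_eq_conjTranspose,
      (CFC.sqrt_nonneg Lam).isSelfAdjoint.star_eq, CFC.sqrt_mul_sqrt_self Lam hpsd.nonneg]⟩
  have hBe : ∀ l l' : ι, ⟪e l, e l'⟫ = ∑ t : ι, (starRingEnd ℂ) (B t l) * B t l' := by
    intro l l'
    have h0 : Lam l l' = (B.conjTranspose * B) l l' := by rw [← hB]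
    simpa [Matrix.mul_apply, Matrix.conjTranspose_apply, RCLike.star_def, Lam,
      Matrix.of_apply] using h0
  let S : ι → F →L[ℂ] F := fun t => ∑ l : ι, B t l • D l
  let A : ι → F →L[ℂ] F := fun t => ∑ l : ι, (starRingEnd ℂ) (B t l) • E l
  let z : ι → F := fun t => ∑ l : ι, (starRingEnd ℂ) (B t l) • d l
  -- basic pairings
  have hDE : ∀ (l : ι) (x y : F), ⟪D l x, y⟫ = ⟪x, E l y⟫ := fun l =>
    Stmt19Aux.anprod_pair FD cr an hcr han_vac han n (b l)
  have hEE : ∀ (l l' : ι) (x y : F), ⟪E l x, E l' y⟫ = ⟪d l, d l'⟫ * ⟪x, y⟫ := by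
    intro l l' x y
    rw [Stmt19Aux.crprod_inner FD cr hcr n (fun j => b l j.rev)
      (fun j => b l' j.rev), FD.inner_tens]
  have hCC : ∀ (l l' : ι) (x y : F), ⟪C l x, C l' y⟫ = ⟪e l, e l'⟫ * ⟪x, y⟫ := by
    intro l l' x y
    rw [Stmt19Aux.crprod_inner FD cr hcr m (a l) (a l'), FD.inner_tens]
  have hSA : ∀ (t : ι) (x y : F), ⟪S t x, y⟫ = ⟪x, A t y⟫ := by
    intro t x y
    simp only [S, A, ContinuousLinearMap.sum_apply, ContinuousLinearMap.smul_apply,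
      sum_inner, inner_sum, inner_smul_left, inner_smul_right]
    exact Finset.sum_congr rfl fun l _ => by rw [hDE l x y]
  have hAz : ∀ (t : ι) (x : F), ⟪A t x, A t x⟫ = ⟪z t, z t⟫ * ⟪x, x⟫ := by
    intro t x
    simp only [A, z, ContinuousLinearMap.sum_apply, ContinuousLinearMap.smul_apply,
      sum_inner, inner_sum, inner_smul_left, inner_smul_right, hEE]
    simp only [Finset.sum_mul, Finset.mul_sum]
    refine Finset.sum_congr rfl fun l _ => Finset.sum_congr rfl fun l' _ => by ring
  have hnormA : ∀ (t : ι) (x : F), ‖A t x‖ = ‖z t‖ * ‖x‖ := by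
    intro t x
    have h1 := hAz t x
    rw [inner_self_eq_norm_sq_to_K, inner_self_eq_norm_sq_to_K,
      inner_self_eq_norm_sq_to_K] at h1
    have h3 : ‖A t x‖ ^ 2 = (‖z t‖ * ‖x‖) ^ 2 := by
      rw [mul_pow]
      exact_mod_cast h1
    have h4 := congrArg Real.sqrt h3
    rwa [Real.sqrt_sq (norm_nonneg _), Real.sqrt_sq (by positivity)] at h4
  have hnormS : ∀ (t : ι) (ψ : F), ‖S t ψ‖ ≤ ‖z t‖ * ‖ψ‖ := by
    intro t ψ
    have h1 : ‖S t ψ‖ ^ 2 = RCLike.re ⟪S t ψ, S t ψ⟫ :=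
      (inner_self_eq_norm_sq (𝕜 := ℂ) _).symm
    have h2 : ⟪S t ψ, S t ψ⟫ = ⟪ψ, A t (S t ψ)⟫ := hSA t ψ (S t ψ)
    have h3 : RCLike.re ⟪ψ, A t (S t ψ)⟫ ≤ ‖ψ‖ * (‖z t‖ * ‖S t ψ‖) :=
      calc RCLike.re ⟪ψ, A t (S t ψ)⟫ ≤ ‖⟪ψ, A t (S t ψ)⟫‖ := RCLike.re_le_norm _
        _ ≤ ‖ψ‖ * ‖A t (S t ψ)‖ := norm_inner_le_norm _ _
        _ = ‖ψ‖ * (‖z t‖ * ‖S t ψ‖) := by rw [hnormA]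
    rw [h2] at h1
    rcases eq_or_lt_of_le (norm_nonneg (S t ψ)) with h0 | h0
    · rw [← h0]; positivity
    · have h6 : ‖S t ψ‖ * ‖S t ψ‖ ≤ (‖z t‖ * ‖ψ‖) * ‖S t ψ‖ := by nlinarith
      exact le_of_mul_le_mul_right h6 h0
  -- conclude via the pointwise bound
  refine ContinuousLinearMap.opNorm_le_bound _ (norm_nonneg _) (fun ψ => ?_)
  have hTψ : Top ψ = ∑ l : ι, C l (D l ψ) := by
    rw [hTop, ContinuousLinearMap.sum_apply, ← Finset.sum_coe_sort]
    rfl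
  have M1 : ⟪Top ψ, Top ψ⟫ = ∑ t : ι, ⟪S t ψ, S t ψ⟫ := by
    have lhs : ⟪∑ l : ι, C l (D l ψ), ∑ l' : ι, C l' (D l' ψ)⟫
        = ∑ l : ι, ∑ l' : ι,
            (∑ t : ι, (starRingEnd ℂ) (B t l) * B t l') * ⟪D l ψ, D l' ψ⟫ := by
      rw [sum_inner]
      refine Finset.sum_congr rfl fun l _ => ?_
      rw [inner_sum]
      refine Finset.sum_congr rfl fun l' _ => ?_
      rw [hCC, hBe]
    have rhs : ∀ t : ι, ⟪S t ψ, S t ψ⟫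
        = ∑ l : ι, ∑ l' : ι,
            ((starRingEnd ℂ) (B t l) * B t l') * ⟪D l ψ, D l' ψ⟫ := by
      intro t
      simp only [S, ContinuousLinearMap.sum_apply, ContinuousLinearMap.smul_apply]
      rw [sum_inner]
      refine Finset.sum_congr rfl fun l _ => ?_
      rw [inner_sum]
      refine Finset.sum_congr rfl fun l' _ => ?_
      rw [inner_smul_left, inner_smul_right]; ring
    rw [hTψ, lhs]
    simp only [rhs, Finset.sum_mul]
    exact (Finset.sum_congr rfl fun l _ => Finset.sum_comm).trans Finset.sum_comm
  have M3 : ⟪v, v⟫ = ∑ t : ι, ⟪z t, z t⟫ := by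
    have hw : ∀ l l' : ι,
        ⟪FD.tens (m + n)
            (Fin.append (fun i : Fin m => (⇑U.symm)^[k l.1] (f i))
              (fun j : Fin n => (⇑U)^[k l.1] (g j.rev))),
          FD.tens (m + n)
            (Fin.append (fun i : Fin m => (⇑U.symm)^[k l'.1] (f i))
              (fun j : Fin n => (⇑U)^[k l'.1] (g j.rev)))⟫
          = ⟪e l', e l⟫ * ⟪d l, d l'⟫ := by
      intro l l'
      rw [FD.inner_tens, Fin.prod_univ_add]
      congr 1
      · rw [FD.inner_tens]
        refine Finset.prod_congr rfl fun i _ => ?_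
        rw [Fin.append_left, Fin.append_left]
        exact Stmt19Aux.symm_iterate_inner U (k l.1) (k l'.1) (f i) (f i)
      · rw [FD.inner_tens]
        refine Finset.prod_congr rfl fun j _ => ?_
        rw [Fin.append_right, Fin.append_right]
    have lhs : ⟪v, v⟫ = ∑ l : ι, ∑ l' : ι, ⟪e l', e l⟫ * ⟪d l, d l'⟫ := by
      rw [hv, ← Finset.sum_coe_sort, sum_inner]
      refine Finset.sum_congr rfl fun l _ => ?_
      rw [inner_sum]
      exact Finset.sum_congr rfl fun l' _ => hw l l'
    have rhs : ∀ t : ι, ⟪z t, z t⟫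
        = ∑ l : ι, ∑ l' : ι,
            (B t l * (starRingEnd ℂ) (B t l')) * ⟪d l, d l'⟫ := by
      intro t
      simp only [z]
      rw [sum_inner]
      refine Finset.sum_congr rfl fun l _ => ?_
      rw [inner_sum]
      refine Finset.sum_congr rfl fun l' _ => ?_
      rw [inner_smul_left, inner_smul_right]
      simp only [Complex.conj_conj]
      ring
    rw [lhs]
    simp only [rhs]
    rw [show (∑ t : ι, ∑ l : ι, ∑ l' : ι,
          (B t l * (starRingEnd ℂ) (B t l')) * ⟪d l, d l'⟫)
        = ∑ l : ι, ∑ l' : ι, ∑ t : ι,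
            (B t l * (starRingEnd ℂ) (B t l')) * ⟪d l, d l'⟫ from
      Finset.sum_comm.trans (Finset.sum_congr rfl fun l _ => Finset.sum_comm)]
    refine Finset.sum_congr rfl fun l _ => Finset.sum_congr rfl fun l' _ => ?_
    rw [hBe l' l, Finset.sum_mul]
    exact Finset.sum_congr rfl fun t _ => by ring
  have R1 : ‖Top ψ‖ ^ 2 = ∑ t : ι, ‖S t ψ‖ ^ 2 := by
    have h1 := M1
    simp only [inner_self_eq_norm_sq_to_K] at h1
    exact_mod_cast h1
  have R2 : ‖v‖ ^ 2 = ∑ t : ι, ‖z t‖ ^ 2 := by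
    have h1 := M3
    simp only [inner_self_eq_norm_sq_to_K] at h1
    exact_mod_cast h1
  have R3 : ∑ t : ι, ‖S t ψ‖ ^ 2 ≤ (∑ t : ι, ‖z t‖ ^ 2) * ‖ψ‖ ^ 2 := by
    rw [Finset.sum_mul]
    refine Finset.sum_le_sum fun t _ => ?_
    calc ‖S t ψ‖ ^ 2 ≤ (‖z t‖ * ‖ψ‖) ^ 2 := by
          have := hnormS t ψ
          nlinarith [norm_nonneg (S t ψ), norm_nonneg (z t), norm_nonneg ψ]
      _ = ‖z t‖ ^ 2 * ‖ψ‖ ^ 2 := by ring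
  have R4 : ‖Top ψ‖ ^ 2 ≤ (‖v‖ * ‖ψ‖) ^ 2 := by
    rw [mul_pow, R2, R1]
    exact R3
  have h5 := Real.sqrt_le_sqrt R4
  rwa [Real.sqrt_sq (norm_nonneg _), Real.sqrt_sq (by positivity)] at h5
end
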